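/- Let A ∈ ℝ^{m×n}, b ∈ ℝ^m, and k a natural number. If u* minimizes u ↦ ‖AAᵀu − b‖₂ over the Krylov subspace K_k(AAᵀ, b), then x* = Aᵀ u* minimizes x ↦ ‖Ax − b‖₂ over the Krylov subspace K_k(AᵀA, Aᵀb). (This is the algebraic equivalence of AB-GMRES with matched backprojector B = Aᵀ and LSQR.) -/

import Mathlib

open Matrix

/-- The Euclidean norm `‖v‖₂ = sqrt (∑ i, v i ^ 2)` of a real vector. -/
noncomputable def euclNorm {ι : Type*} [Fintype ι] (v : ι → ℝ) : ℝ :=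
  Real.sqrt (∑ i, v i ^ 2)

/-- The `k`-th Krylov subspace `K_k(M, v) = span {v, Mv, …, M^{k-1} v}`. -/
def krylov {N : ℕ} (M : Matrix (Fin N) (Fin N) ℝ) (v : Fin N → ℝ) (k : ℕ) :
    Submodule ℝ (Fin N → ℝ) :=
  Submodule.span ℝ (Set.range fun i : Fin k => (M ^ (i : ℕ)).mulVec v)

/-- Algebraic equivalence of AB-GMRES with matched backprojector `B = Aᵀ` and LSQR:
if `u*` minimizes `u ↦ ‖AAᵀu − b‖₂` over `K_k(AAᵀ, b)`, then `x* = Aᵀu*` minimizes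
`x ↦ ‖Ax − b‖₂` over `K_k(AᵀA, Aᵀb)`. -/
theorem stmt_11 (m n : ℕ) (A : Matrix (Fin m) (Fin n) ℝ) (b : Fin m → ℝ) (k : ℕ)
    (ustar : Fin m → ℝ) (hu : ustar ∈ krylov (A * Aᵀ) b k)
    (hmin : ∀ u ∈ krylov (A * Aᵀ) b k,
      euclNorm ((A * Aᵀ).mulVec ustar - b) ≤ euclNorm ((A * Aᵀ).mulVec u - b)) :
    Aᵀ.mulVec ustar ∈ krylov (Aᵀ * A) (Aᵀ.mulVec b) k ∧
    ∀ x ∈ krylov (Aᵀ * A) (Aᵀ.mulVec b) k,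
      euclNorm (A.mulVec (Aᵀ.mulVec ustar) - b) ≤ euclNorm (A.mulVec x - b) := by
  have hcomm : ∀ i : ℕ, Aᵀ * (A * Aᵀ) ^ i = (Aᵀ * A) ^ i * Aᵀ := by
    intro i
    induction i with
    | zero => simp
    | succ n ih =>
      rw [pow_succ, pow_succ, ← Matrix.mul_assoc, ih]
      simp [Matrix.mul_assoc]
  have hmap : Submodule.map Aᵀ.mulVecLin (krylov (A * Aᵀ) b k)
      = krylov (Aᵀ * A) (Aᵀ.mulVec b) k := by
    unfold krylov
    rw [Submodule.map_span, ← Set.range_comp]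
    congr 1
    ext x
    constructor
    · rintro ⟨i, rfl⟩
      exact ⟨i, by
        simp only [Function.comp, Matrix.mulVecLin_apply, Matrix.mulVec_mulVec, hcomm]⟩
    · rintro ⟨i, rfl⟩
      exact ⟨i, by
        simp only [Function.comp, Matrix.mulVecLin_apply, Matrix.mulVec_mulVec, hcomm]⟩
  constructor
  · rw [← hmap]
    exact ⟨ustar, hu, rfl⟩
  · intro x hx
    rw [← hmap] at hx
    obtain ⟨u, hu', rfl⟩ := hx
    have h1 : A.mulVec (Aᵀ.mulVec ustar) = (A * Aᵀ).mulVec ustar := by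
      rw [Matrix.mulVec_mulVec]
    have h2 : A.mulVec (Aᵀ.mulVecLin u) = (A * Aᵀ).mulVec u := by
      rw [Matrix.mulVecLin_apply, Matrix.mulVec_mulVec]
    rw [h1, h2]
    exact hmin u hu'
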